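/- Define the map σ : A_G → A_G by (σ x)(h) := complex conjugate (taken coefficientwise, as a function on G) of x(h⁻¹). Then σ is an additive, conjugate-linear involution that is antimultiplicative (σ(x·y) = σ(y)·σ(x) for all x, y ∈ A_G), it satisfies σ(F^{h,g}) = F^{h⁻¹,g}, and consequently σ(G^{h,g}) = G^{h⁻¹,g} for all h, g ∈ G and σ(T^{n,g}) = T^{n⁻¹,g} for all n, g ∈ G. (These are the Hermitian-conjugation properties of the tunneling and condensation ribbon operators.) -/

import Mathlib

open scoped Classical

/-- The ribbon basis element `F^{h,g} := single h 𝟙_{{g}}` of the algebra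
`A_G = MonoidAlgebra (G → ℂ) G`. -/
noncomputable def Frib {G : Type*} [Group G] (h g : G) : MonoidAlgebra (G → ℂ) G :=
  MonoidAlgebra.single h (fun x => if x = g then (1 : ℂ) else 0)

/-- The tunneling ribbon operator
`G^{h,g} := ∑_{n ∈ N} ∑_{n' ∈ N'} F^{n'⁻¹hn', n'⁻¹gn}`. -/
noncomputable def Grib {G : Type*} [Group G] [Fintype G] (N N' : Subgroup G) (h g : G) :
    MonoidAlgebra (G → ℂ) G :=
  ∑ n : N, ∑ n' : N', Frib ((n' : G)⁻¹ * h * (n' : G)) ((n' : G)⁻¹ * g * (n : G))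

/-- The condensation ribbon operator `T^{n,g} := ∑_{ℓ ∈ M} F^{ℓnℓ⁻¹, ℓg⁻¹}`. -/
noncomputable def Trib {G : Type*} [Group G] [Fintype G] (M : Subgroup G) (n g : G) :
    MonoidAlgebra (G → ℂ) G :=
  ∑ ℓ : M, Frib ((ℓ : G) * n * (ℓ : G)⁻¹) ((ℓ : G) * g⁻¹)

/-- Hermitian conjugation `σ` on `A_G`: `(σ x)(h) := conj (x (h⁻¹))` coefficientwise. -/
noncomputable def hermConj {G : Type*} [Group G] [Fintype G]
    (x : MonoidAlgebra (G → ℂ) G) : MonoidAlgebra (G → ℂ) G :=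
  MonoidAlgebra.ofCoeff (Finsupp.equivFunOnFinite.symm (fun h => fun t => (starRingEnd ℂ) (x.coeff h⁻¹ t)))

lemma hermConj_apply {G : Type*} [Group G] [Fintype G] (x : MonoidAlgebra (G → ℂ) G)
    (h : G) (t : G) : (hermConj x).coeff h t = (starRingEnd ℂ) (x.coeff h⁻¹ t) := rfl

lemma mul_apply_fintype {G : Type*} [Group G] [Fintype G] (f g : MonoidAlgebra (G → ℂ) G)
    (x : G) : (f * g).coeff x = ∑ a : G, ∑ b : G, if a * b = x then f.coeff a * g.coeff b else 0 := by
  rw [MonoidAlgebra.mul_apply, Finsupp.sum_fintype]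
  · refine Finset.sum_congr rfl fun a _ => ?_
    rw [Finsupp.sum_fintype]
    intro b; simp
  · intro a; simp

lemma hermConj_add {G : Type*} [Group G] [Fintype G] (x y : MonoidAlgebra (G → ℂ) G) :
    hermConj (x + y) = hermConj x + hermConj y := by
  ext h t
  rw [show ((hermConj x + hermConj y).coeff h t) = (hermConj x).coeff h t + (hermConj y).coeff h t from rfl,
    hermConj_apply, hermConj_apply, hermConj_apply,
    show ((x + y).coeff h⁻¹ t) = x.coeff h⁻¹ t + y.coeff h⁻¹ t from rfl, map_add]

lemma hermConj_smul {G : Type*} [Group G] [Fintype G] (c : ℂ) (x : MonoidAlgebra (G → ℂ) G) :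
    hermConj (c • x) = (starRingEnd ℂ c) • hermConj x := by
  ext h t
  rw [show (((starRingEnd ℂ c) • hermConj x).coeff h t) = (starRingEnd ℂ c) * (hermConj x).coeff h t from rfl,
    hermConj_apply, hermConj_apply,
    show ((c • x).coeff h⁻¹ t) = c * x.coeff h⁻¹ t from rfl, map_mul]

lemma hermConj_zero {G : Type*} [Group G] [Fintype G] :
    hermConj (0 : MonoidAlgebra (G → ℂ) G) = 0 := by
  ext h t
  rw [hermConj_apply, show ((0 : MonoidAlgebra (G → ℂ) G).coeff h⁻¹ t) = 0 from rfl, map_zero]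
  rfl

lemma hermConj_invol {G : Type*} [Group G] [Fintype G] (x : MonoidAlgebra (G → ℂ) G) :
    hermConj (hermConj x) = x := by
  ext h t
  rw [hermConj_apply, hermConj_apply, inv_inv, Complex.conj_conj]

lemma hermConj_mul {G : Type*} [Group G] [Fintype G] (x y : MonoidAlgebra (G → ℂ) G) :
    hermConj (x * y) = hermConj y * hermConj x := by
  ext h t
  rw [hermConj_apply, mul_apply_fintype, mul_apply_fintype]
  simp only [Finset.sum_apply, ite_apply, Pi.zero_apply, Pi.mul_apply, map_sum, apply_ite,
    map_zero, map_mul, hermConj_apply]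
  rw [Finset.sum_comm]
  refine Fintype.sum_equiv (Equiv.inv G) _ _ fun a => ?_
  refine Fintype.sum_equiv (Equiv.inv G) _ _ fun b => ?_
  simp only [Equiv.inv_apply, inv_inv]
  by_cases hab : b * a = h⁻¹
  · rw [if_pos hab, if_pos (by rw [← inv_inv h, ← hab]; group), mul_comm]
  · rw [if_neg hab, if_neg (fun e => hab (by rw [← e]; group))]

lemma hermConj_sum {G : Type*} [Group G] [Fintype G] {ι : Type*} (s : Finset ι)
    (f : ι → MonoidAlgebra (G → ℂ) G) :
    hermConj (∑ i ∈ s, f i) = ∑ i ∈ s, hermConj (f i) := by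
  classical
  induction s using Finset.induction_on with
  | empty => simpa using hermConj_zero
  | insert _ _ hni ih => rw [Finset.sum_insert hni, Finset.sum_insert hni, hermConj_add, ih]

lemma hermConj_Frib {G : Type*} [Group G] [Fintype G] (h g : G) :
    hermConj (Frib h g) = Frib h⁻¹ g := by
  ext k t
  simp only [hermConj_apply, Frib, MonoidAlgebra.coeff_single, Finsupp.single_apply]
  by_cases hk : h = k⁻¹
  · subst hk; simp
  · rw [if_neg hk, if_neg (by intro e; exact hk (by rw [← e]; group))]
    simp

/-- `σ` is an additive, conjugate-linear, antimultiplicative involution on `A_G`, with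
`σ(F^{h,g}) = F^{h⁻¹,g}`, `σ(G^{h,g}) = G^{h⁻¹,g}` and `σ(T^{n,g}) = T^{n⁻¹,g}`. -/
theorem hermConj_properties {G : Type*} [Group G] [Fintype G] (N N' M : Subgroup G) :
    (∀ x y : MonoidAlgebra (G → ℂ) G, hermConj (x + y) = hermConj x + hermConj y) ∧
    (∀ (c : ℂ) (x : MonoidAlgebra (G → ℂ) G),
        hermConj (c • x) = (starRingEnd ℂ c) • hermConj x) ∧
    (∀ x : MonoidAlgebra (G → ℂ) G, hermConj (hermConj x) = x) ∧
    (∀ x y : MonoidAlgebra (G → ℂ) G, hermConj (x * y) = hermConj y * hermConj x) ∧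
    (∀ h g : G, hermConj (Frib h g) = Frib h⁻¹ g) ∧
    (∀ h g : G, hermConj (Grib N N' h g) = Grib N N' h⁻¹ g) ∧
    (∀ n g : G, hermConj (Trib M n g) = Trib M n⁻¹ g) := by
  refine ⟨hermConj_add, hermConj_smul, hermConj_invol, hermConj_mul, hermConj_Frib, ?_, ?_⟩
  · intro h g
    rw [Grib, hermConj_sum]
    refine Finset.sum_congr rfl fun n _ => ?_
    rw [hermConj_sum]
    refine Finset.sum_congr rfl fun n' _ => ?_
    rw [hermConj_Frib, show ((n' : G)⁻¹ * h * (n' : G))⁻¹ = (n' : G)⁻¹ * h⁻¹ * (n' : G) by group]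
  · intro n g
    rw [Trib, hermConj_sum]
    refine Finset.sum_congr rfl fun ℓ _ => ?_
    rw [hermConj_Frib, show ((ℓ : G) * n * (ℓ : G)⁻¹)⁻¹ = (ℓ : G) * n⁻¹ * (ℓ : G)⁻¹ by group]
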